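/- Let H be a complex inner product space and let A : Fin 5 → Fin 2 → (H →ₗ[ℂ] H) satisfy: (A i x) ∘ (A i x) = id for all i, x, and A i x commutes with A j y whenever i ≠ j. Define X'₁ = (A 1 0 + A 1 1)/√2, Z'₁ = (A 1 0 − A 1 1)/√2, and X'ᵢ = A i 0, Z'ᵢ = A i 1 for sites i = 2,…,5; set S'₁ = X'₁Z'₂Z'₃X'₄, S'₂ = X'₂Z'₃Z'₄X'₅, S'₃ = X'₁X'₃Z'₄Z'₅, S'₄ = Z'₁X'₂X'₄Z'₅, and the Bell operator B₅ = √2·S'₁ + S'₂ + √2·S'₃ + 2√2·S'₄. Then the operator identity (1 + 4√2)·id − B₅ = (1/√2)·(id − S'₁)² + (1/2)·(id − S'₂)² + (1/√2)·(id − S'₃)² + √2·(id − S'₄)² holds. -/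
import Mathlib


noncomputable section

namespace BellI5

variable {H : Type*} [NormedAddCommGroup H] [InnerProductSpace ℂ H]

lemma prod4_sq {R : Type*} [Ring R] (w x y z : R)
    (hx : x * x = 1) (hy : y * y = 1) (hz : z * z = 1)
    (hwx : Commute w x) (hwy : Commute w y) (hwz : Commute w z)
    (hxy : Commute x y) (hxz : Commute x z) (hyz : Commute y z) :
    (w * x * y * z) * (w * x * y * z) = w * w := by
  have h1 : Commute z (w * x * y) := ((hwz.symm.mul_right hxz.symm).mul_right hyz.symm)
  have h2 : Commute y (w * x) := (hwy.symm.mul_right hxy.symm)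
  have h3 : Commute x w := hwx.symm
  calc (w * x * y * z) * (w * x * y * z)
      = (w * x * y) * (w * x * y) * (z * z) := h1.mul_mul_mul_comm _ _
    _ = (w * x) * (w * x) * (y * y) * (z * z) := by rw [h2.mul_mul_mul_comm]
    _ = (w * w) * (x * x) * (y * y) * (z * z) := by rw [h3.mul_mul_mul_comm]
    _ = w * w := by rw [hx, hy, hz, mul_one, mul_one, mul_one]

/-- The effective `X` observable at each site (site `0` plays the special role). -/
def Xop (A : Fin 5 → Fin 2 → Module.End ℂ H) (i : Fin 5) : Module.End ℂ H :=
  if i = 0 then (Real.sqrt 2 : ℂ)⁻¹ • (A 0 0 + A 0 1) else A i 0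

/-- The effective `Z` observable at each site (site `0` plays the special role). -/
def Zop (A : Fin 5 → Fin 2 → Module.End ℂ H) (i : Fin 5) : Module.End ℂ H :=
  if i = 0 then (Real.sqrt 2 : ℂ)⁻¹ • (A 0 0 - A 0 1) else A i 1

/-- The four operators `S'₁, S'₂, S'₃, S'₄` built from the measurement observables. -/
def S (A : Fin 5 → Fin 2 → Module.End ℂ H) : Fin 4 → Module.End ℂ H :=
  ![Xop A 0 * Zop A 1 * Zop A 2 * Xop A 3,
    Xop A 1 * Zop A 2 * Zop A 3 * Xop A 4,
    Xop A 0 * Xop A 2 * Zop A 3 * Zop A 4,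
    Zop A 0 * Xop A 1 * Xop A 3 * Zop A 4]

/-- The Bell operator `B₅ = √2·S'₁ + S'₂ + √2·S'₃ + 2√2·S'₄`. -/
def Bell (A : Fin 5 → Fin 2 → Module.End ℂ H) : Module.End ℂ H :=
  (Real.sqrt 2 : ℂ) • S A 0 + S A 1 + (Real.sqrt 2 : ℂ) • S A 2 +
    ((2 * Real.sqrt 2 : ℝ) : ℂ) • S A 3

/-- the sum-of-squares decomposition
`(1 + 4√2)·id − B₅ = (1/√2)(id − S'₁)² + (1/2)(id − S'₂)² + (1/√2)(id − S'₃)² + √2(id − S'₄)²`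
for dichotomic (`A i x² = id`) observables commuting across different sites. -/
theorem sos_decomposition (A : Fin 5 → Fin 2 → Module.End ℂ H)
    (hsq : ∀ i x, A i x * A i x = 1)
    (hcomm : ∀ i j x y, i ≠ j → A i x * A j y = A j y * A i x) :
    ((1 + 4 * Real.sqrt 2 : ℝ) : ℂ) • (1 : Module.End ℂ H) - Bell A =
      (Real.sqrt 2 : ℂ)⁻¹ • (1 - S A 0) ^ 2 + (2 : ℂ)⁻¹ • (1 - S A 1) ^ 2 +
        (Real.sqrt 2 : ℂ)⁻¹ • (1 - S A 2) ^ 2 + (Real.sqrt 2 : ℂ) • (1 - S A 3) ^ 2 := by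
  -- basic commutation facts
  have hA : ∀ i j x y, i ≠ j → Commute (A i x) (A j y) := fun i j x y h => hcomm i j x y h
  have hR : ∀ i j x, i ≠ j → Commute (A i x) (Xop A j) ∧ Commute (A i x) (Zop A j) := by
    intro i j x h
    unfold Xop Zop
    split_ifs with hj
    · subst hj
      exact ⟨((hA _ _ x 0 h).add_right (hA _ _ x 1 h)).smul_right _,
             ((hA _ _ x 0 h).sub_right (hA _ _ x 1 h)).smul_right _⟩
    · exact ⟨hA _ _ _ _ h, hA _ _ _ _ h⟩
  have hL : ∀ (i : Fin 5) (Q : Module.End ℂ H), (∀ x, Commute (A i x) Q) →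
      Commute (Xop A i) Q ∧ Commute (Zop A i) Q := by
    intro i Q hQ
    unfold Xop Zop
    split_ifs with hi
    · subst hi
      exact ⟨((hQ 0).add_left (hQ 1)).smul_left _, ((hQ 0).sub_left (hQ 1)).smul_left _⟩
    · exact ⟨hQ 0, hQ 1⟩
  have hXX : ∀ i j, i ≠ j → Commute (Xop A i) (Xop A j) :=
    fun i j h => (hL i _ (fun x => (hR i j x h).1)).1
  have hXZ : ∀ i j, i ≠ j → Commute (Xop A i) (Zop A j) :=
    fun i j h => (hL i _ (fun x => (hR i j x h).2)).1
  have hZX : ∀ i j, i ≠ j → Commute (Zop A i) (Xop A j) :=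
    fun i j h => (hL i _ (fun x => (hR i j x h).1)).2
  have hZZ : ∀ i j, i ≠ j → Commute (Zop A i) (Zop A j) :=
    fun i j h => (hL i _ (fun x => (hR i j x h).2)).2
  -- squares of single-site ops away from site 0
  have hXsq : ∀ i : Fin 5, i ≠ 0 → Xop A i * Xop A i = 1 := by
    intro i h; unfold Xop; rw [if_neg h]; exact hsq i 0
  have hZsq : ∀ i : Fin 5, i ≠ 0 → Zop A i * Zop A i = 1 := by
    intro i h; unfold Zop; rw [if_neg h]; exact hsq i 1
  -- scalar facts
  have hs2 : (Real.sqrt 2 : ℂ) * (Real.sqrt 2 : ℂ) = 2 := by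
    rw [← Complex.ofReal_mul, Real.mul_self_sqrt (by norm_num)]; norm_num
  have hsne : (Real.sqrt 2 : ℂ) ≠ 0 := by
    simp [Complex.ofReal_ne_zero, Real.sqrt_eq_zero']
  have hcc : ((Real.sqrt 2 : ℝ) : ℂ)⁻¹ * ((Real.sqrt 2 : ℝ) : ℂ)⁻¹ = (2 : ℂ)⁻¹ := by
    rw [← mul_inv, hs2]
  have hcinv : ((Real.sqrt 2 : ℝ) : ℂ)⁻¹ = (2 : ℂ)⁻¹ * ((Real.sqrt 2 : ℝ) : ℂ) := by
    field_simp
    linear_combination (-1 : ℂ) * hs2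
  -- squares of site-0 ops
  set C : Module.End ℂ H := A 0 0 * A 0 1 + A 0 1 * A 0 0 with hC
  have hX0 : Xop A 0 * Xop A 0 = 1 + (2 : ℂ)⁻¹ • C := by
    unfold Xop; rw [if_pos rfl, smul_mul_smul_comm, hcc]
    have : (A 0 0 + A 0 1) * (A 0 0 + A 0 1) = (1 + 1) + C := by
      simp only [add_mul, mul_add, hsq, hC]; abel
    rw [this]
    module
  have hZ0 : Zop A 0 * Zop A 0 = 1 - (2 : ℂ)⁻¹ • C := by
    unfold Zop; rw [if_pos rfl, smul_mul_smul_comm, hcc]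
    have : (A 0 0 - A 0 1) * (A 0 0 - A 0 1) = (1 + 1) - C := by
      simp only [sub_mul, mul_sub, hsq, hC]; abel
    rw [this]
    module
  -- definitional unfoldings of S
  have hS0 : S A 0 = Xop A 0 * Zop A 1 * Zop A 2 * Xop A 3 := rfl
  have hS1 : S A 1 = Xop A 1 * Zop A 2 * Zop A 3 * Xop A 4 := rfl
  have hS2 : S A 2 = Xop A 0 * Xop A 2 * Zop A 3 * Zop A 4 := rfl
  have hS3 : S A 3 = Zop A 0 * Xop A 1 * Xop A 3 * Zop A 4 := rfl
  -- squares of the stabilizers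
  have hSq0 : S A 0 * S A 0 = 1 + (2 : ℂ)⁻¹ • C := by
    rw [hS0, prod4_sq _ _ _ _ (hZsq 1 (by decide)) (hZsq 2 (by decide)) (hXsq 3 (by decide))
      (hXZ 0 1 (by decide)) (hXZ 0 2 (by decide)) (hXX 0 3 (by decide))
      (hZZ 1 2 (by decide)) (hZX 1 3 (by decide)) (hZX 2 3 (by decide)), hX0]
  have hSq1 : S A 1 * S A 1 = 1 := by
    rw [hS1, prod4_sq _ _ _ _ (hZsq 2 (by decide)) (hZsq 3 (by decide)) (hXsq 4 (by decide))
      (hXZ 1 2 (by decide)) (hXZ 1 3 (by decide)) (hXX 1 4 (by decide))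
      (hZZ 2 3 (by decide)) (hZX 2 4 (by decide)) (hZX 3 4 (by decide)), hXsq 1 (by decide)]
  have hSq2 : S A 2 * S A 2 = 1 + (2 : ℂ)⁻¹ • C := by
    rw [hS2, prod4_sq _ _ _ _ (hXsq 2 (by decide)) (hZsq 3 (by decide)) (hZsq 4 (by decide))
      (hXX 0 2 (by decide)) (hXZ 0 3 (by decide)) (hXZ 0 4 (by decide))
      (hXZ 2 3 (by decide)) (hXZ 2 4 (by decide)) (hZZ 3 4 (by decide)), hX0]
  have hSq3 : S A 3 * S A 3 = 1 - (2 : ℂ)⁻¹ • C := by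
    rw [hS3, prod4_sq _ _ _ _ (hXsq 1 (by decide)) (hXsq 3 (by decide)) (hZsq 4 (by decide))
      (hZX 0 1 (by decide)) (hZX 0 3 (by decide)) (hZZ 0 4 (by decide))
      (hXX 1 3 (by decide)) (hXZ 1 4 (by decide)) (hXZ 3 4 (by decide)), hZ0]
  -- assemble
  unfold Bell
  simp only [pow_two, sub_mul, mul_sub, one_mul, mul_one, hSq0, hSq1, hSq2, hSq3]
  rw [hcinv]
  push_cast
  match_scalars <;> ring

end BellI5
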